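/- Assume cos(2nα)·(cos(2α) + sin(2α)) ≤ 1 (the large-α regime, so that λ_B ≥ 0). Then for each k ∈ {0,1}: (⟨0|⊗ₖI₂)·(M⊗ₖI₂)·C_X·(ψₖ⊗ₖI₂) = √λ_A · Uₖ, and (⟨1|⊗ₖI₂)·(M⊗ₖσz)·C_X·(ψₖ⊗ₖI₂) = (−1)^{k+1}·i·√λ_B · Uₖ (equalities of 2×2 complex matrices). (Proposition 3 of the paper: the quantum circuit with one CNOT, the isometry M and a qutrit measurement performs optimal perfect probabilistic retrieval of the two qubit unitaries.) -/
import Mathlib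


open Matrix Kronecker Complex Filter
open scoped ComplexOrder

noncomputable section

/-- Pauli `σx`. -/
def pX : Matrix (Fin 2) (Fin 2) ℂ := !![0, 1; 1, 0]

/-- Pauli `σz`. -/
def pZ : Matrix (Fin 2) (Fin 2) ℂ := !![1, 0; 0, -1]

/-- `|+⟩ = (1,1)/√2`. -/
def plusV : Fin 2 → ℂ := ((Real.sqrt 2 : ℂ))⁻¹ • ![1, 1]

/-- `|−⟩ = (1,−1)/√2`. -/
def minusV : Fin 2 → ℂ := ((Real.sqrt 2 : ℂ))⁻¹ • ![1, -1]

/-- The memory states `ψ₀ = (e^{inα}, e^{-inα})/√2`, `ψ₁ = (e^{-inα}, e^{inα})/√2`. -/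
def psiMem (n : ℕ) (α : ℝ) (k : Fin 2) : Fin 2 → ℂ :=
  if k = 0 then
    ((Real.sqrt 2 : ℂ))⁻¹ • ![Complex.exp (Complex.I * n * α), Complex.exp (-(Complex.I * n * α))]
  else
    ((Real.sqrt 2 : ℂ))⁻¹ • ![Complex.exp (-(Complex.I * n * α)), Complex.exp (Complex.I * n * α)]

/-- The two unitaries `U₀ = diag(e^{iα}, e^{-iα})`, `U₁ = diag(e^{-iα}, e^{iα})`. -/
def Umat (α : ℝ) (k : Fin 2) : Matrix (Fin 2) (Fin 2) ℂ :=
  if k = 0 then !![Complex.exp (Complex.I * α), 0; 0, Complex.exp (-(Complex.I * α))]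
  else !![Complex.exp (-(Complex.I * α)), 0; 0, Complex.exp (Complex.I * α)]

/-- CNOT with second factor as control and first factor as target. -/
def CX : Matrix (Fin 2 × Fin 2) (Fin 2 × Fin 2) ℂ :=
  (1 : Matrix (Fin 2) (Fin 2) ℂ) ⊗ₖ !![(1 : ℂ), 0; 0, 0] + pX ⊗ₖ !![(0 : ℂ), 0; 0, 1]

/-- `ψ ⊗ₖ I₂` : the 4×2 matrix tensoring a column vector with the identity. -/
def ketI (ψ : Fin 2 → ℂ) : Matrix (Fin 2 × Fin 2) (Fin 2) ℂ :=
  Matrix.of fun p b => ψ p.1 * (if p.2 = b then 1 else 0)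

/-- `⟨j| ⊗ₖ I₂` : the 2×6 matrix contracting the qutrit factor with `|j⟩`. -/
def braI (j : Fin 3) : Matrix (Fin 2) (Fin 3 × Fin 2) ℂ :=
  Matrix.of fun b p => if p.1 = j ∧ p.2 = b then 1 else 0

/-- `λ_A = (1 + c̃ₙ(c̃ − s̃))/2`. -/
def lamA (n : ℕ) (α : ℝ) : ℝ :=
  (1 + Real.cos (2 * n * α) * (Real.cos (2 * α) - Real.sin (2 * α))) / 2

/-- `λ_B = (1 − c̃ₙ(c̃ + s̃))/2`. -/
def lamB (n : ℕ) (α : ℝ) : ℝ :=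
  (1 - Real.cos (2 * n * α) * (Real.cos (2 * α) + Real.sin (2 * α))) / 2

/-- `ν₊ = c̃ₙ(1 − c̃² + s̃)/(1 + c̃ₙ)`. -/
def nuP (n : ℕ) (α : ℝ) : ℝ :=
  Real.cos (2 * n * α) * (1 - Real.cos (2 * α) ^ 2 + Real.sin (2 * α)) / (1 + Real.cos (2 * n * α))

/-- `ν₋ = c̃ₙ(c̃² − 1 + s̃)/(1 − c̃ₙ)`. -/
def nuM (n : ℕ) (α : ℝ) : ℝ :=
  Real.cos (2 * n * α) * (Real.cos (2 * α) ^ 2 - 1 + Real.sin (2 * α)) / (1 - Real.cos (2 * n * α))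

/-- `a₁ = (√λ_A·c/cₙ, √λ_B·s/cₙ, √ν₊)`. -/
def aOne (n : ℕ) (α : ℝ) : Fin 3 → ℂ :=
  ![((Real.sqrt (lamA n α) * Real.cos α / Real.cos (n * α) : ℝ) : ℂ),
    ((Real.sqrt (lamB n α) * Real.sin α / Real.cos (n * α) : ℝ) : ℂ),
    ((Real.sqrt (nuP n α) : ℝ) : ℂ)]

/-- `a₂ = (√λ_A·s/sₙ, −√λ_B·c/sₙ, −√ν₋)`. -/
def aTwo (n : ℕ) (α : ℝ) : Fin 3 → ℂ :=
  ![((Real.sqrt (lamA n α) * Real.sin α / Real.sin (n * α) : ℝ) : ℂ),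
    ((-(Real.sqrt (lamB n α) * Real.cos α / Real.sin (n * α)) : ℝ) : ℂ),
    ((-Real.sqrt (nuM n α) : ℝ) : ℂ)]

/-- The qubit-to-qutrit isometry `M` with `M|+⟩ = a₁`, `M|−⟩ = a₂`. -/
def Mmat (n : ℕ) (α : ℝ) : Matrix (Fin 3) (Fin 2) ℂ :=
  Matrix.vecMulVec (aOne n α) (star plusV) + Matrix.vecMulVec (aTwo n α) (star minusV)

set_option maxHeartbeats 8000000 in
theorem circuit_retrieves_unitaries_large_alpha (n : ℕ) (hn : 1 ≤ n) (α : ℝ) (hα : 0 < α)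
    (hdist : 4 * n * α < Real.pi)
    (hreg : Real.cos (2 * n * α) * (Real.cos (2 * α) + Real.sin (2 * α)) ≤ 1) (k : Fin 2) :
    braI 0 * ((Mmat n α) ⊗ₖ (1 : Matrix (Fin 2) (Fin 2) ℂ)) * CX * ketI (psiMem n α k)
      = ((Real.sqrt (lamA n α) : ℝ) : ℂ) • Umat α k ∧
    braI 1 * ((Mmat n α) ⊗ₖ pZ) * CX * ketI (psiMem n α k)
      = ((-1 : ℂ) ^ ((k : ℕ) + 1) * Complex.I * ((Real.sqrt (lamB n α) : ℝ) : ℂ)) • Umat α k := by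
  have h2 : (Real.sqrt 2 : ℂ) ≠ 0 := by
    simpa using Real.sqrt_ne_zero'.mpr (by norm_num : (0:ℝ) < 2)
  have hn1 : (1:ℝ) ≤ (n:ℝ) := by exact_mod_cast hn
  have hna : 0 < (n:ℝ) * α := mul_pos (by linarith) hα
  have hpi : 0 < Real.pi := Real.pi_pos
  have hna2 : (n:ℝ) * α < Real.pi / 2 := by nlinarith
  have hcn : Real.cos ((n:ℝ) * α) ≠ 0 :=
    ne_of_gt (Real.cos_pos_of_mem_Ioo ⟨by linarith, hna2⟩)
  have hsn : Real.sin ((n:ℝ) * α) ≠ 0 :=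
    ne_of_gt (Real.sin_pos_of_pos_of_lt_pi hna (by linarith))
  have hexp1 : Complex.exp (Complex.I * n * α)
      = (Real.cos ((n:ℝ)*α) : ℂ) + (Real.sin ((n:ℝ)*α) : ℂ) * Complex.I := by
    rw [show Complex.I * n * α = (((n:ℝ)*α : ℝ):ℂ) * Complex.I by push_cast; ring,
      Complex.exp_mul_I, Complex.ofReal_cos, Complex.ofReal_sin]
  have hexp2 : Complex.exp (-(Complex.I * n * α))
      = (Real.cos ((n:ℝ)*α) : ℂ) - (Real.sin ((n:ℝ)*α) : ℂ) * Complex.I := by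
    rw [show -(Complex.I * n * α) = ((-((n:ℝ)*α) : ℝ):ℂ) * Complex.I by push_cast; ring,
      Complex.exp_mul_I, Complex.ofReal_cos, Complex.ofReal_sin]
    push_cast; rw [Complex.cos_neg, Complex.sin_neg]; ring
  have hexp3 : Complex.exp (Complex.I * α)
      = (Real.cos α : ℂ) + (Real.sin α : ℂ) * Complex.I := by
    rw [show Complex.I * α = ((α : ℝ):ℂ) * Complex.I by push_cast; ring,
      Complex.exp_mul_I, Complex.ofReal_cos, Complex.ofReal_sin]
  have hexp4 : Complex.exp (-(Complex.I * α))
      = (Real.cos α : ℂ) - (Real.sin α : ℂ) * Complex.I := by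
    rw [show -(Complex.I * α) = ((-α : ℝ):ℂ) * Complex.I by push_cast; ring,
      Complex.exp_mul_I, Complex.ofReal_cos, Complex.ofReal_sin]
    push_cast; rw [Complex.cos_neg, Complex.sin_neg]; ring
  have hs2 : ((Real.sqrt 2 : ℝ):ℂ) * ((Real.sqrt 2 : ℝ):ℂ) = 2 := by
    rw [← Complex.ofReal_mul, Real.mul_self_sqrt (by norm_num)]; norm_num
  have hcnC : (Real.cos ((n:ℝ) * α) : ℂ) ≠ 0 := by exact_mod_cast hcn
  have hsnC : (Real.sin ((n:ℝ) * α) : ℂ) ≠ 0 := by exact_mod_cast hsn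
  have hs3 : ((Real.sqrt 2 : ℝ):ℂ) ^ 3 = 2 * ((Real.sqrt 2 : ℝ):ℂ) := by
    rw [show (3:ℕ) = 2 + 1 from rfl, pow_succ, sq, hs2]
  have hs2' : ((Real.sqrt 2 : ℝ):ℂ) ^ 2 = 2 := by rw [sq, hs2]
  have hcnC' : Complex.cos ((n:ℕ) * (α:ℂ)) ≠ 0 := by
    have := hcnC; push_cast at this ⊢; exact this
  have hsnC' : Complex.sin ((n:ℕ) * (α:ℂ)) ≠ 0 := by
    have := hsnC; push_cast at this ⊢; exact this
  fin_cases k <;>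
  · constructor <;>
    · ext i j
      fin_cases i <;> fin_cases j <;>
      · simp only [braI, Mmat, CX, ketI, psiMem, Umat, pX, pZ, aOne, aTwo, plusV, minusV,
          Matrix.mul_apply, Matrix.kroneckerMap_apply, Matrix.vecMulVec_apply,
          Fintype.sum_prod_type, Fin.sum_univ_two, Fin.sum_univ_three,
          Matrix.add_apply, Matrix.one_apply, Matrix.smul_apply, Matrix.of_apply,
          Matrix.cons_val_zero, Matrix.cons_val_one, Matrix.head_cons, Matrix.head_fin_const,
          Pi.star_apply, Pi.smul_apply, smul_eq_mul, RCLike.star_def, map_inv₀, _root_.map_one,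
          Complex.conj_ofReal, map_neg, hexp1, hexp2, hexp3, hexp4]
        norm_num [Fin.ext_iff]
        try field_simp
        try ring_nf
        try simp only [hs3, hs2', hs2, Complex.I_sq]
        try ring_nf
        try ring
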